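/- arXiv:1110.2481 — 2 statements merged into one kernel-verified Lean document; each statement's English description precedes it below -/
import Mathlib

section
/- Let T > 0 and d ≥ 1. Let (t_n, b_n) be a sequence with t_n ∈ [0,T] and b_n : [0,T] → ℝ^d continuous of bounded variation and stopped (a_{t_n} b_n = b_n), which is Cauchy with respect to ρ_{1-var}, i.e. for every ε > 0 there is N such that ρ_{1-var}((t_n,b_n),(t_m,b_m)) < ε for all n, m ≥ N. Then there exist t ∈ [0,T] and a continuous bounded-variation function b : [0,T] → ℝ^d with a_t b = b such that ρ_{1-var}((t_n,b_n),(t,b)) → 0 as n → ∞. -/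
open Filter

open Set ENNReal Topology

section Helpers

variable {α : Type*} [LinearOrder α] {E : Type*} [SeminormedAddCommGroup E]

lemma evar_add_le (f g : α → E) (s : Set α) :
    eVariationOn (fun x => f x + g x) s ≤ eVariationOn f s + eVariationOn g s :=
  iSup_le fun ⟨n, u, hu, us⟩ => by
    calc
      (∑ i ∈ Finset.range n, edist (f (u (i + 1)) + g (u (i + 1))) (f (u i) + g (u i)))
          ≤ ∑ i ∈ Finset.range n,
              (edist (f (u (i + 1))) (f (u i)) + edist (g (u (i + 1))) (g (u i))) :=
        Finset.sum_le_sum fun i _ => edist_add_add_le _ _ _ _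
      _ = (∑ i ∈ Finset.range n, edist (f (u (i + 1))) (f (u i)))
            + ∑ i ∈ Finset.range n, edist (g (u (i + 1))) (g (u i)) :=
        Finset.sum_add_distrib
      _ ≤ _ := add_le_add (eVariationOn.sum_le (f := f) (n := n) hu us) (eVariationOn.sum_le (f := g) (n := n) hu us)

lemma evar_edist_congr {f g : α → E} (s : Set α)
    (h : ∀ x y, edist (f x) (f y) = edist (g x) (g y)) :
    eVariationOn f s = eVariationOn g s := by
  dsimp only [eVariationOn]
  congr 1 with p : 1
  congr 1 with i : 1
  exact h _ _

lemma evar_add_const (f : α → E) (v : E) (s : Set α) :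
    eVariationOn (fun x => f x + v) s = eVariationOn f s :=
  evar_edist_congr s fun x y => by rw [edist_dist, edist_dist, dist_add_right]

lemma evar_sub_const (f : α → E) (v : E) (s : Set α) :
    eVariationOn (fun x => f x - v) s = eVariationOn f s := by
  have := evar_add_const f (-v) s
  simpa [sub_eq_add_neg] using this

lemma evar_neg (f : α → E) (s : Set α) :
    eVariationOn (fun x => -f x) s = eVariationOn f s :=
  evar_edist_congr s fun x y => by rw [edist_dist, edist_dist, dist_neg_neg]

lemma evar_sub_le (f g : α → E) (s : Set α) :
    eVariationOn (fun x => f x - g x) s ≤ eVariationOn f s + eVariationOn g s := by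
  have h := evar_add_le f (fun x => -g x) s
  rw [evar_neg] at h
  simpa [sub_eq_add_neg] using h

end Helpers

/-- Right-continuity of the variation of a continuous function of bounded variation. -/
lemma evar_small_right {E : Type*} [SeminormedAddCommGroup E] (g : ℝ → E) {A B : ℝ}
    (hAB : A ≤ B) (hg : ContinuousOn g (Set.Icc A B))
    (hbv : eVariationOn g (Set.Icc A B) ≠ ⊤) {ε : ℝ≥0∞} (hε : 0 < ε) :
    ∃ δ > (0 : ℝ), ∀ u, A ≤ u → u ≤ B → u < A + δ → eVariationOn g (Set.Icc A u) < ε := by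
  rcases eq_or_lt_of_le hAB with rfl | hAB'
  · refine ⟨1, one_pos, fun u h1 h2 _ => ?_⟩
    have hu : u = A := le_antisymm h2 h1
    subst hu
    rw [Set.Icc_self, eVariationOn.subsingleton g Set.subsingleton_singleton]
    exact hε
  by_cases hex : ∃ u, A < u ∧ u ≤ B ∧ eVariationOn g (Set.Icc A u) < ε
  · obtain ⟨u, hAu, huB, hvar⟩ := hex
    refine ⟨u - A, by linarith, fun u' h1 h2 h3 => ?_⟩
    exact lt_of_le_of_lt (eVariationOn.mono g (Set.Icc_subset_Icc le_rfl (by linarith))) hvar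
  exfalso
  push_neg at hex
  have hc : ∀ u, A < u → u ≤ B → ε ≤ eVariationOn g (Set.Icc A u) := hex
  set V := eVariationOn g (Set.Icc A B) with hV
  have hεV : ε ≤ V := hc B hAB' le_rfl
  have hεtop : ε ≠ ⊤ := ne_top_of_le_ne_top hbv hεV
  set half := ε / 2 with hhalf
  set ε4 := half / 2 with hε4
  have hε4pos : 0 < ε4 := ENNReal.half_pos (ENNReal.half_pos hε.ne').ne'
  have hε4top : ε4 ≠ ⊤ := by
    refine ne_top_of_le_ne_top hεtop ?_
    exact le_trans ENNReal.half_le_self ENNReal.half_le_self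
  have hε4V : ε4 ≤ V :=
    le_trans (le_trans ENNReal.half_le_self ENNReal.half_le_self) hεV
  have hV0 : V ≠ 0 := fun h => by simp [h] at hεV; exact hε.ne' hεV
  have hsub : V - ε4 < V := ENNReal.sub_lt_self hbv hV0 hε4pos.ne'
  obtain ⟨⟨n, ⟨u, hu, us⟩⟩, hlt⟩ :
      ∃ p : ℕ × { u : ℕ → ℝ // Monotone u ∧ ∀ i, u i ∈ Set.Icc A B },
        V - ε4 < ∑ i ∈ Finset.range p.1,
          edist (g ((p.2 : ℕ → ℝ) (i + 1))) (g ((p.2 : ℕ → ℝ) i)) :=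
    lt_iSup_iff.mp hsub
  set D : ℝ≥0∞ := 2 * ((n : ℝ≥0∞) + 1) with hD
  have hD0 : D ≠ 0 := by simp [hD]
  have hDtop : D ≠ ⊤ := by
    refine ENNReal.mul_ne_top (by simp) (by simp)
  set κ := ε4 / D with hκ
  have hκpos : 0 < κ := ENNReal.div_pos hε4pos.ne' hDtop
  have hDκ : D * κ = ε4 := ENNReal.mul_div_cancel hD0 hDtop
  -- smallest partition point above A (or B)
  have hne : (Finset.range (n + 1)).Nonempty := ⟨0, by simp⟩
  set P := (Finset.range (n + 1)).inf' hne (fun i => if A < u i then u i else B) with hP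
  have hAP : A < P := by
    rw [Finset.lt_inf'_iff]
    intro i _
    by_cases h : A < u i
    · simpa [h] using h
    · simpa [h] using hAB'
  have hPB : P ≤ B := by
    rw [Finset.inf'_le_iff]
    refine ⟨0, by simp, ?_⟩
    by_cases h : A < u 0
    · simp [h, (us 0).2]
    · simp [h]
  have hPle : ∀ i, i ≤ n → A < u i → P ≤ u i := by
    intro i hi h
    have h2 := Finset.inf'_le (f := fun i => if A < u i then u i else B)
      (Finset.mem_range.mpr (Nat.lt_succ_of_le hi))
    rw [if_pos h] at h2
    exact h2
  -- pick x ∈ (A, P) close to A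
  have hgA : ContinuousWithinAt g (Set.Icc A B) A := hg A ⟨le_rfl, hAB⟩
  have hev : ∀ᶠ x in 𝓝[Set.Icc A B] A, edist (g x) (g A) < κ :=
    (EMetric.tendsto_nhds.mp hgA) κ hκpos
  have hIooIcc : Set.Ioo A P ⊆ Set.Icc A B :=
    fun x hx => ⟨hx.1.le, hx.2.le.trans hPB⟩
  have hnebot : (𝓝[Set.Ioo A P] A).NeBot := by
    rw [← mem_closure_iff_nhdsWithin_neBot, closure_Ioo hAP.ne]
    exact ⟨le_rfl, hAP.le⟩
  have hle : 𝓝[Set.Ioo A P] A ≤ 𝓝[Set.Icc A B] A := nhdsWithin_mono A hIooIcc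
  obtain ⟨x, hxIoo, hxκ⟩ :
      ∃ x, x ∈ Set.Ioo A P ∧ edist (g x) (g A) < κ := by
    have h1 : ∀ᶠ x in 𝓝[Set.Ioo A P] A, x ∈ Set.Ioo A P := self_mem_nhdsWithin
    have h2 : ∀ᶠ x in 𝓝[Set.Ioo A P] A, edist (g x) (g A) < κ := hev.filter_mono hle
    exact (h1.and h2).exists
  have hAx : A < x := hxIoo.1
  have hxB : x ≤ B := hxIoo.2.le.trans hPB
  -- clamp partition from below at x
  set w := fun i => max (u i) x with hw
  have hwmono : Monotone w := fun i j hij => max_le_max (hu hij) le_rfl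
  have hws : ∀ i, w i ∈ Set.Icc x B := fun i => ⟨le_max_right _ _, max_le (us i).2 hxB⟩
  have hterm : ∀ i, i ≤ n → edist (g (w i)) (g (u i)) ≤ κ := by
    intro i hi
    rcases lt_or_ge A (u i) with h | h
    · have hxui : x ≤ u i := hxIoo.2.le.trans (hPle i hi h)
      rw [hw]
      simp [max_eq_left hxui]
    · have hui : u i = A := le_antisymm h (us i).1
      have hwi : w i = x := by rw [hw]; simp [hui, max_eq_right hAx.le]
      rw [hwi, hui]
      exact hxκ.le
  -- sum comparison
  have hsum : (∑ i ∈ Finset.range n, edist (g (u (i + 1))) (g (u i)))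
      ≤ (∑ i ∈ Finset.range n, edist (g (w (i + 1))) (g (w i))) + n • (κ + κ) := by
    calc
      (∑ i ∈ Finset.range n, edist (g (u (i + 1))) (g (u i)))
          ≤ ∑ i ∈ Finset.range n, (edist (g (w (i + 1))) (g (w i)) + (κ + κ)) := by
        refine Finset.sum_le_sum fun i hi => ?_
        have hi' : i < n := Finset.mem_range.mp hi
        have t4 : edist (g (u (i + 1))) (g (u i))
            ≤ edist (g (u (i + 1))) (g (w (i + 1))) + edist (g (w (i + 1))) (g (w i))
              + edist (g (w i)) (g (u i)) := edist_triangle4 _ _ _ _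
        have h1 : edist (g (u (i + 1))) (g (w (i + 1))) ≤ κ := by
          rw [edist_comm]; exact hterm (i + 1) hi'
        have h2 : edist (g (w i)) (g (u i)) ≤ κ := hterm i hi'.le
        calc edist (g (u (i + 1))) (g (u i)) ≤ _ := t4
          _ ≤ κ + edist (g (w (i + 1))) (g (w i)) + κ :=
            add_le_add (add_le_add h1 le_rfl) h2
          _ = edist (g (w (i + 1))) (g (w i)) + (κ + κ) := by ring
      _ = (∑ i ∈ Finset.range n, edist (g (w (i + 1))) (g (w i))) + n • (κ + κ) := by
        rw [Finset.sum_add_distrib, Finset.sum_const, Finset.card_range]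
  have hnκ : n • (κ + κ) ≤ ε4 := by
    have h1 : (n : ℝ≥0∞) * (κ + κ) = (2 * n) * κ := by ring
    have h2 : (2 * (n : ℝ≥0∞)) * κ ≤ D * κ := by
      refine mul_le_mul_left ?_ κ
      rw [hD, mul_add, mul_one]
      exact le_self_add
    calc n • (κ + κ) = (n : ℝ≥0∞) * (κ + κ) := nsmul_eq_mul n _
      _ = (2 * n) * κ := h1
      _ ≤ D * κ := h2
      _ = ε4 := hDκ
  set Y := eVariationOn g (Set.Icc x B) with hY
  have hnew : (∑ i ∈ Finset.range n, edist (g (w (i + 1))) (g (w i))) ≤ Y :=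
    eVariationOn.sum_le (f := g) (n := n) hwmono hws
  -- additivity at x
  have hadd : eVariationOn g (Set.Icc A x) + Y = V := by
    have h := eVariationOn.Icc_add_Icc (s := Set.Icc A B) g (le_of_lt hAx) hxB
      (Set.mem_Icc.mpr ⟨hAx.le, hxB⟩)
    rw [Set.Icc_inter_Icc, Set.Icc_inter_Icc, Set.Icc_inter_Icc] at h
    simp only [sup_idem, inf_idem, sup_eq_right.mpr hAx.le, inf_eq_right.mpr hxB] at h
    exact h
  have hYtop : Y ≠ ⊤ := by
    refine ne_top_of_le_ne_top hbv ?_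
    rw [← hadd]; exact le_add_self
  have hεY : ε + Y ≤ V := by
    rw [← hadd]
    exact add_le_add_left (hc x hAx hxB) Y
  have hVlt : V < Y + half := by
    have h1 : V - ε4 < Y + ε4 := lt_of_lt_of_le hlt (le_trans hsum (add_le_add hnew hnκ))
    have h2 : V ≤ (V - ε4) + ε4 := le_tsub_add
    calc V ≤ (V - ε4) + ε4 := h2
      _ < (Y + ε4) + ε4 := by exact ENNReal.add_lt_add_right hε4top h1
      _ = Y + (ε4 + ε4) := by rw [add_assoc]
      _ = Y + half := by rw [hε4, ENNReal.add_halves]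
  have hcontr : ε < half := by
    have h : ε + Y < half + Y := by
      calc ε + Y ≤ V := hεY
        _ < Y + half := hVlt
        _ = half + Y := add_comm _ _
    exact (ENNReal.add_lt_add_iff_right hYtop).mp h
  exact absurd hcontr (not_lt.mpr (ENNReal.half_le_self))

/-- The metric `ρ_{1-var}((t,b),(s,e)) = |t - s| + |a_t b - a_s e|_{1-var;[0,T]}`,
where `a_t` is the stopping operator `(a_t x)(r) = x(min(r,t))`. -/
noncomputable def rho1var {d : ℕ} (T : ℝ) (t : ℝ) (b : ℝ → EuclideanSpace ℝ (Fin d))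
    (s : ℝ) (e : ℝ → EuclideanSpace ℝ (Fin d)) : ℝ :=
  |t - s| + (eVariationOn (fun r => b (min r t) - e (min r s)) (Set.Icc 0 T)).toReal

/-- every `ρ_{1-var}`-Cauchy sequence of stopped continuous
bounded-variation paths converges in `ρ_{1-var}` to a stopped continuous
bounded-variation path. -/
theorem stmt_3 (T : ℝ) (hT : 0 < T) (d : ℕ) (hd : 1 ≤ d)
    (t : ℕ → ℝ) (b : ℕ → ℝ → EuclideanSpace ℝ (Fin d))
    (ht : ∀ n, t n ∈ Set.Icc 0 T)
    (hcont : ∀ n, ContinuousOn (b n) (Set.Icc 0 T))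
    (hbv : ∀ n, BoundedVariationOn (b n) (Set.Icc 0 T))
    (hstop : ∀ n r, b n (min r (t n)) = b n r)
    (hcauchy : ∀ ε : ℝ, 0 < ε → ∃ N : ℕ, ∀ n ≥ N, ∀ m ≥ N,
      rho1var T (t n) (b n) (t m) (b m) < ε) :
    ∃ tl ∈ Set.Icc 0 T, ∃ bl : ℝ → EuclideanSpace ℝ (Fin d),
      ContinuousOn bl (Set.Icc 0 T) ∧ BoundedVariationOn bl (Set.Icc 0 T) ∧
      (∀ r, bl (min r tl) = bl r) ∧
      Tendsto (fun n => rho1var T (t n) (b n) tl bl) atTop (nhds 0) := by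
  classical
  set s : Set ℝ := Set.Icc 0 T with hsdef
  set c : ℕ → ℝ → EuclideanSpace ℝ (Fin d) := fun n r => b n r - b n 0 with hcdef
  -- difference of BV functions is BV
  have hbv' : ∀ n m, BoundedVariationOn (fun r => b n r - b m r) s := fun n m =>
    ne_top_of_le_ne_top (ENNReal.add_ne_top.mpr ⟨hbv n, hbv m⟩) (evar_sub_le (b n) (b m) s)
  -- rewrite the metric using stoppedness
  have hrho : ∀ n m, rho1var T (t n) (b n) (t m) (b m)
      = |t n - t m| + (eVariationOn (fun r => b n r - b m r) s).toReal := by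
    intro n m
    have hfe : (fun r => b n (min r (t n)) - b m (min r (t m)))
        = fun r => b n r - b m r := funext fun r => by rw [hstop n r, hstop m r]
    rw [rho1var, hfe]
  have hcau2 : ∀ ε : ℝ, 0 < ε → ∃ N, ∀ n ≥ N, ∀ m ≥ N,
      |t n - t m| < ε ∧ eVariationOn (fun r => b n r - b m r) s ≤ ENNReal.ofReal ε := by
    intro ε hε
    obtain ⟨N, hN⟩ := hcauchy ε hε
    refine ⟨N, fun n hn m hm => ?_⟩
    have h := hN n hn m hm
    rw [hrho] at h
    constructor
    · have := le_add_of_nonneg_right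
        (a := |t n - t m|) (ENNReal.toReal_nonneg
          (a := eVariationOn (fun r => b n r - b m r) s))
      linarith
    · have h2 : (eVariationOn (fun r => b n r - b m r) s).toReal ≤ ε := by
        have := abs_nonneg (t n - t m); linarith
      rw [← ENNReal.ofReal_toReal (hbv' n m)]
      exact ENNReal.ofReal_le_ofReal h2
  -- limit of times
  have htc : CauchySeq t := by
    rw [Metric.cauchySeq_iff]
    intro ε hε
    obtain ⟨N, hN⟩ := hcau2 ε hε
    exact ⟨N, fun m hm n hn => by rw [Real.dist_eq]; exact (hN m hm n hn).1⟩
  obtain ⟨tl, htl⟩ := cauchySeq_tendsto_of_complete htc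
  have htl_mem : tl ∈ s := isClosed_Icc.mem_of_tendsto htl (Eventually.of_forall ht)
  have h0tl : (0:ℝ) ≤ tl := htl_mem.1
  have htlT : tl ≤ T := htl_mem.2
  -- uniform Cauchyness of the centered paths c
  have hdiffEvar : ∀ n m, eVariationOn (fun r => c n r - c m r) s
      = eVariationOn (fun r => b n r - b m r) s := by
    intro n m
    have hfe : (fun r => c n r - c m r)
        = fun r => (b n r - b m r) - (b n 0 - b m 0) := funext fun r => by
      simp only [hcdef]; abel
    rw [hfe, evar_sub_const]
  have hkey : ∀ n m, ∀ r ∈ s, dist (c n r) (c m r)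
      ≤ (eVariationOn (fun r => b n r - b m r) s).toReal := by
    intro n m r hr
    have h0 : (0:ℝ) ∈ s := ⟨le_rfl, hT.le⟩
    have hd2 := (hbv' n m).dist_le hr h0
    have heq : dist (c n r) (c m r) = dist (b n r - b m r) (b n 0 - b m 0) := by
      simp only [hcdef, dist_eq_norm]
      congr 1
      abel
    rw [heq]; exact hd2
  have hcauc : ∀ ε : ℝ, 0 < ε → ∃ N, ∀ n ≥ N, ∀ m ≥ N, ∀ r ∈ s,
      dist (c n r) (c m r) ≤ ε := by
    intro ε hε
    obtain ⟨N, hN⟩ := hcau2 ε hε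
    refine ⟨N, fun n hn m hm r hr => (hkey n m r hr).trans ?_⟩
    have h2 := (hN n hn m hm).2
    calc (eVariationOn (fun r => b n r - b m r) s).toReal
        ≤ (ENNReal.ofReal ε).toReal := ENNReal.toReal_mono ENNReal.ofReal_ne_top h2
      _ = ε := ENNReal.toReal_ofReal hε.le
  have hcs : ∀ r ∈ s, CauchySeq (fun n => c n r) := by
    intro r hr
    rw [Metric.cauchySeq_iff]
    intro ε hε
    obtain ⟨N, hN⟩ := hcauc (ε / 2) (half_pos hε)
    exact ⟨N, fun m hm n hn =>
      lt_of_le_of_lt (hN m hm n hn r hr) (half_lt_self hε)⟩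
  set L : ℝ → EuclideanSpace ℝ (Fin d) := fun r => limUnder atTop (fun n => c n r)
    with hLdef
  have hLp : ∀ r ∈ s, Tendsto (fun n => c n r) atTop (𝓝 (L r)) := fun r hr =>
    (hcs r hr).tendsto_limUnder
  have hLu : ∀ ε : ℝ, 0 < ε → ∃ N, ∀ n ≥ N, ∀ r ∈ s, dist (c n r) (L r) ≤ ε := by
    intro ε hε
    obtain ⟨N, hN⟩ := hcauc ε hε
    refine ⟨N, fun n hn r hr => ?_⟩
    have htd : Tendsto (fun m => dist (c n r) (c m r)) atTop
        (𝓝 (dist (c n r) (L r))) := tendsto_const_nhds.dist (hLp r hr)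
    exact le_of_tendsto htd (eventually_atTop.mpr ⟨N, fun m hm => hN n hn m hm r hr⟩)
  have hLcont : ContinuousOn L s := by
    have hTU : TendstoUniformlyOn (fun n r => c n r) L atTop s := by
      rw [Metric.tendstoUniformlyOn_iff]
      intro ε hε
      obtain ⟨N, hN⟩ := hLu (ε / 2) (half_pos hε)
      refine eventually_atTop.mpr ⟨N, fun n hn r hr => ?_⟩
      rw [dist_comm]
      exact lt_of_le_of_lt (hN n hn r hr) (half_lt_self hε)
    exact hTU.continuousOn (Frequently.of_forall fun n => (hcont n).sub continuousOn_const)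
  have hcEvar : ∀ n, eVariationOn (c n) s = eVariationOn (b n) s := fun n =>
    evar_sub_const (b n) (b n 0) s
  -- L has bounded variation
  have hLbv : eVariationOn L s ≠ ⊤ := by
    obtain ⟨N, hN⟩ := hcau2 1 one_pos
    intro htop
    have hv : eVariationOn (c N) s + 1 < eVariationOn L s := by
      rw [htop]
      exact lt_top_iff_ne_top.mpr
        (ENNReal.add_ne_top.mpr ⟨by rw [hcEvar]; exact hbv N, ENNReal.one_ne_top⟩)
    have hev := eVariationOn.lowerSemicontinuous_aux (F := fun n => c n) (f := L)
      (s := s) (p := atTop) hLp hv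
    obtain ⟨m, hlt, hm⟩ := (hev.and (eventually_ge_atTop N)).exists
    have hle : eVariationOn (c m) s ≤ eVariationOn (c N) s + 1 := by
      have h1 : eVariationOn (fun r => c m r - c N r) s ≤ 1 := by
        rw [hdiffEvar]
        have := (hN m hm N le_rfl).2
        rwa [ENNReal.ofReal_one] at this
      have hfe : (fun x => (c m x - c N x) + c N x) = c m := funext fun x => by abel
      have h2 := evar_add_le (fun r => c m r - c N r) (c N) s
      rw [hfe] at h2
      calc eVariationOn (c m) s
          ≤ eVariationOn (fun r => c m r - c N r) s + eVariationOn (c N) s := h2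
        _ ≤ 1 + eVariationOn (c N) s := add_le_add_left h1 _
        _ = eVariationOn (c N) s + 1 := add_comm _ _
    exact absurd hle (not_le.mpr hlt)
  -- the limit path
  set φ : ℝ → ℝ := fun r => max (min r tl) 0 with hφdef
  have hφmono : Monotone φ := fun x y hxy => max_le_max (min_le_min hxy le_rfl) le_rfl
  have hφmaps : ∀ r, φ r ∈ s := fun r =>
    ⟨le_max_right _ _, max_le ((min_le_right r tl).trans htlT) hT.le⟩
  set bl : ℝ → EuclideanSpace ℝ (Fin d) := fun r => L (φ r) with hbldef
  have hblstop : ∀ r, bl (min r tl) = bl r := by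
    intro r
    simp only [hbldef, hφdef]
    rw [min_assoc, min_self]
  have hφcont : Continuous φ := (continuous_id.min continuous_const).max continuous_const
  have hblcont : ContinuousOn bl s :=
    hLcont.comp hφcont.continuousOn fun r _ => hφmaps r
  have hblbv : BoundedVariationOn bl s := by
    have h := eVariationOn.comp_le_of_monotoneOn L φ (hφmono.monotoneOn s)
      fun r _ => hφmaps r
    exact ne_top_of_le_ne_top hLbv h
  have hblval : ∀ r ∈ s, bl r = L (min r tl) := by
    intro r hr
    simp only [hbldef, hφdef]
    rw [max_eq_left (le_min hr.1 h0tl)]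
  -- main convergence estimate
  have main : ∀ ε : ℝ, 0 < ε → ∃ N, ∀ n ≥ N,
      eVariationOn (fun r => c n r - bl r) s ≤ ENNReal.ofReal ε := by
    intro ε hε
    have hε8 : 0 < ε / 8 := by linarith
    obtain ⟨N₁, hN₁⟩ := hcau2 (ε / 8) hε8
    -- right-continuity of the variation of c N₁ at tl
    have hgc : ContinuousOn (c N₁) (Set.Icc tl T) :=
      ((hcont N₁).sub continuousOn_const).mono (Set.Icc_subset_Icc h0tl le_rfl)
    have hgbv : eVariationOn (c N₁) (Set.Icc tl T) ≠ ⊤ := by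
      refine ne_top_of_le_ne_top ?_ (eVariationOn.mono (c N₁)
        (Set.Icc_subset_Icc h0tl le_rfl))
      rw [hcEvar]; exact hbv N₁
    obtain ⟨δ, hδpos, hδ⟩ := evar_small_right (c N₁) htlT hgc hgbv
      (ε := ENNReal.ofReal (ε / 8)) (by simpa using hε8)
    obtain ⟨N₂, hN₂⟩ := (Metric.tendsto_atTop.mp htl) δ hδpos
    refine ⟨max N₁ N₂, fun n hn => ?_⟩
    by_contra hcon
    have hlt : ENNReal.ofReal ε < eVariationOn (fun r => c n r - bl r) s :=
      lt_of_not_ge hcon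
    have hFp : ∀ r ∈ s, Tendsto (fun m => c n r - c m (min r tl)) atTop
        (𝓝 (c n r - bl r)) := by
      intro r hr
      have hmem : min r tl ∈ s := ⟨le_min hr.1 h0tl, (min_le_right r tl).trans htlT⟩
      rw [hblval r hr]
      exact tendsto_const_nhds.sub (hLp (min r tl) hmem)
    have hev := eVariationOn.lowerSemicontinuous_aux
      (F := fun m => fun r => c n r - c m (min r tl)) (f := fun r => c n r - bl r)
      (s := s) (p := atTop) hFp hlt
    obtain ⟨m, hlt2, hm⟩ := (hev.and (eventually_ge_atTop (max N₁ N₂))).exists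
    have hmN₁ : N₁ ≤ m := le_trans (le_max_left _ _) hm
    have hnN₁ : N₁ ≤ n := le_trans (le_max_left _ _) hn
    set τ := max tl (min (t m) T) with hτdef
    have hτ1 : tl ≤ τ := le_max_left _ _
    have hτ2 : τ ≤ T := max_le htlT (min_le_right _ _)
    have hτδ : τ < tl + δ := by
      have h1 := hN₂ m (le_trans (le_max_right N₁ N₂) hm)
      rw [Real.dist_eq] at h1
      have h2 := abs_lt.mp h1
      refine max_lt (by linarith [hδpos]) (lt_of_le_of_lt (min_le_left _ _) ?_)
      linarith [h2.2]
    -- piece A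
    have hA : eVariationOn (fun r => c n r - c m r) s ≤ ENNReal.ofReal (ε / 8) := by
      rw [hdiffEvar]
      exact (hN₁ n hnN₁ m hmN₁).2
    -- piece B : the stopping discrepancy of c m
    set G : ℝ → EuclideanSpace ℝ (Fin d) := fun r => c m r - c m (min r tl) with hGdef
    have hG1 : eVariationOn G (Set.Icc 0 tl) = 0 := by
      refine eVariationOn.constant_on ?_
      rintro x ⟨r, hr, rfl⟩ y ⟨r', hr', rfl⟩
      simp only [hGdef]
      rw [min_eq_left hr.2, min_eq_left hr'.2, sub_self, sub_self]
    have hG2 : eVariationOn G (Set.Icc tl T) = eVariationOn (c m) (Set.Icc tl T) := by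
      have heqon : Set.EqOn G (fun r => c m r - c m tl) (Set.Icc tl T) := fun r hr => by
        simp only [hGdef]
        rw [min_eq_right hr.1]
      rw [eVariationOn.eq_of_eqOn heqon, evar_sub_const]
    have hsplit : eVariationOn G s
        = eVariationOn G (Set.Icc 0 tl) + eVariationOn G (Set.Icc tl T) := by
      have h := eVariationOn.Icc_add_Icc (s := s) G h0tl htlT htl_mem
      rw [hsdef] at h ⊢
      rw [Set.inter_eq_self_of_subset_right (Set.Icc_subset_Icc le_rfl htlT),
        Set.inter_eq_self_of_subset_right (Set.Icc_subset_Icc h0tl le_rfl),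
        Set.inter_self] at h
      exact h.symm
    -- split the variation of c m on [tl, T] at τ
    have hsplit2 : eVariationOn (c m) (Set.Icc tl T)
        = eVariationOn (c m) (Set.Icc tl τ) + eVariationOn (c m) (Set.Icc τ T) := by
      have h := eVariationOn.Icc_add_Icc (s := Set.Icc tl T) (c m) hτ1 hτ2
        (Set.mem_Icc.mpr ⟨hτ1, hτ2⟩)
      rw [Set.inter_eq_self_of_subset_right (Set.Icc_subset_Icc le_rfl hτ2),
        Set.inter_eq_self_of_subset_right (Set.Icc_subset_Icc hτ1 le_rfl),
        Set.inter_self] at h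
      exact h.symm
    have hC2 : eVariationOn (c m) (Set.Icc τ T) = 0 := by
      refine eVariationOn.constant_on ?_
      have hval : ∀ r ∈ Set.Icc τ T, c m r = c m (t m) := by
        intro r hr
        have htm : t m ≤ r := by
          have := hr.1
          have h2 : min (t m) T ≤ τ := le_max_right _ _
          have h3 : min (t m) T = t m := min_eq_left (ht m).2
          linarith [h3 ▸ h2]
        have hb : b m r = b m (t m) := by
          rw [← hstop m r, min_eq_right htm]
        simp only [hcdef, hb]
      rintro x ⟨r, hr, rfl⟩ y ⟨r', hr', rfl⟩
      rw [hval r hr, hval r' hr']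
    have hC1 : eVariationOn (c m) (Set.Icc tl τ)
        ≤ ENNReal.ofReal (ε / 8) + ENNReal.ofReal (ε / 8) := by
      have hsubs : Set.Icc tl τ ⊆ s := Set.Icc_subset_Icc h0tl hτ2
      have hdd : eVariationOn (fun r => c m r - c N₁ r) (Set.Icc tl τ)
          ≤ ENNReal.ofReal (ε / 8) := by
        refine le_trans (eVariationOn.mono _ hsubs) ?_
        rw [hdiffEvar]
        exact (hN₁ m hmN₁ N₁ le_rfl).2
      have hgg : eVariationOn (c N₁) (Set.Icc tl τ) ≤ ENNReal.ofReal (ε / 8) :=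
        (hδ τ hτ1 hτ2 hτδ).le
      have hfe : (fun x => (c m x - c N₁ x) + c N₁ x) = c m := funext fun x => by abel
      have h2 := evar_add_le (fun r => c m r - c N₁ r) (c N₁) (Set.Icc tl τ)
      rw [hfe] at h2
      exact h2.trans (add_le_add hdd hgg)
    -- combine
    have hF : eVariationOn (fun r => c n r - c m (min r tl)) s
        ≤ ENNReal.ofReal (ε / 8)
          + (ENNReal.ofReal (ε / 8) + ENNReal.ofReal (ε / 8)) := by
      have hfe : (fun r => c n r - c m (min r tl))
          = fun r => (c n r - c m r) + G r := funext fun r => by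
        simp only [hGdef]; abel
      rw [hfe]
      refine (evar_add_le _ _ s).trans (add_le_add hA ?_)
      rw [hsplit, hG1, zero_add, hG2, hsplit2, hC2, add_zero]
      exact hC1
    have hcontr := hlt2.trans_le hF
    rw [← ENNReal.ofReal_add hε8.le hε8.le, ← ENNReal.ofReal_add hε8.le (by linarith)]
      at hcontr
    have := (ENNReal.ofReal_lt_ofReal_iff (by linarith)).mp hcontr
    linarith
  -- final convergence
  have hρ : ∀ n, rho1var T (t n) (b n) tl bl
      = |t n - tl| + (eVariationOn (fun r => c n r - bl r) s).toReal := by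
    intro n
    have hfe : (fun r => b n (min r (t n)) - bl (min r tl))
        = fun r => (c n r - bl r) + b n 0 := funext fun r => by
      rw [hstop n r, hblstop r]
      simp only [hcdef]
      abel
    rw [rho1var, hfe, evar_add_const]
  have h1 : Tendsto (fun n => |t n - tl|) atTop (𝓝 (0:ℝ)) := by
    have := (htl.sub (tendsto_const_nhds (x := tl))).abs
    simpa using this
  have h2 : Tendsto (fun n => (eVariationOn (fun r => c n r - bl r) s).toReal)
      atTop (𝓝 (0:ℝ)) := by
    rw [Metric.tendsto_atTop]
    intro ε hε
    obtain ⟨N, hN⟩ := main (ε / 2) (half_pos hε)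
    refine ⟨N, fun n hn => ?_⟩
    have hb2 := hN n hn
    have h3 : (eVariationOn (fun r => c n r - bl r) s).toReal ≤ ε / 2 := by
      calc (eVariationOn (fun r => c n r - bl r) s).toReal
          ≤ (ENNReal.ofReal (ε / 2)).toReal :=
            ENNReal.toReal_mono ENNReal.ofReal_ne_top hb2
        _ = ε / 2 := ENNReal.toReal_ofReal (half_pos hε).le
    rw [Real.dist_eq, sub_zero, abs_of_nonneg ENNReal.toReal_nonneg]
    linarith
  refine ⟨tl, htl_mem, bl, hblcont, hblbv, hblstop, ?_⟩
  have := h1.add h2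
  rw [add_zero] at this
  refine Tendsto.congr (fun n => (hρ n).symm) this
end

section
/- Let T > 0 and d ≥ 1. Suppose t_n → t in [0,T], x : [0,T] → ℝ^d is continuous of bounded variation, and x_n : [0,T] → ℝ^d are functions of bounded variation with |x_n − x|_{1-var;[0,T]} → 0 and x_n(0) → x(0). Then ρ_{1-var}((t_n,x_n),(t,x)) → 0. In other words, convergence in the product topology of [0,T] × C^{1-var}([0,T],ℝ^d) implies convergence in the metric ρ_{1-var}. -/
open Filter

open Set
open scoped ENNReal NNReal

variable {α : Type*} [LinearOrder α] {E : Type*} [SeminormedAddCommGroup E]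

lemma my_evar_neg (f : α → E) (s : Set α) :
    eVariationOn (fun r => -(f r)) s = eVariationOn f s := by
  simp only [eVariationOn]
  congr 1 with p : 1
  congr 1 with i : 1
  exact edist_neg_neg _ _

lemma my_evar_const_sub (c : E) (f : α → E) (s : Set α) :
    eVariationOn (fun r => c - f r) s = eVariationOn f s := by
  simp only [eVariationOn]
  congr 1 with p : 1
  congr 1 with i : 1
  exact edist_sub_left _ _ _

lemma my_evar_add_le (f g : α → E) (s : Set α) :
    eVariationOn (fun r => f r + g r) s ≤ eVariationOn f s + eVariationOn g s := by
  refine iSup_le ?_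
  rintro ⟨n, u, hu, us⟩
  calc ∑ i ∈ Finset.range n, edist (f (u (i+1)) + g (u (i+1))) (f (u i) + g (u i))
      ≤ ∑ i ∈ Finset.range n, (edist (f (u (i+1))) (f (u i)) + edist (g (u (i+1))) (g (u i))) :=
        Finset.sum_le_sum fun i _ => edist_add_add_le _ _ _ _
    _ = (∑ i ∈ Finset.range n, edist (f (u (i+1))) (f (u i)))
        + ∑ i ∈ Finset.range n, edist (g (u (i+1))) (g (u i)) := Finset.sum_add_distrib
    _ ≤ _ := add_le_add (eVariationOn.sum_le (f := f) (n := n) hu us) (eVariationOn.sum_le (f := g) (n := n) hu us)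

lemma my_stop_diff_eq {T a b : ℝ} (x : ℝ → E) (ha : a ∈ Icc 0 T) (hb : b ∈ Icc 0 T) (hab : a ≤ b) :
    eVariationOn (fun r => x (min r a) - x (min r b)) (Icc 0 T) = eVariationOn x (Icc a b) := by
  set g : ℝ → E := fun r => x (min r a) - x (min r b) with hg
  have e1 : Icc (0:ℝ) T ∩ Icc 0 a = Icc 0 a := inter_eq_right.2 (Icc_subset_Icc le_rfl ha.2)
  have e2 : Icc (0:ℝ) T ∩ Icc a T = Icc a T := inter_eq_right.2 (Icc_subset_Icc ha.1 le_rfl)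
  have e3 : Icc (0:ℝ) T ∩ Icc a b = Icc a b := inter_eq_right.2 (Icc_subset_Icc ha.1 hb.2)
  have e4 : Icc (0:ℝ) T ∩ Icc b T = Icc b T := inter_eq_right.2 (Icc_subset_Icc hb.1 le_rfl)
  have h1 : eVariationOn g (Icc 0 T ∩ Icc 0 a) + eVariationOn g (Icc 0 T ∩ Icc a T)
      = eVariationOn g (Icc 0 T ∩ Icc 0 T) := eVariationOn.Icc_add_Icc g ha.1 ha.2 ha
  have h2 : eVariationOn g (Icc 0 T ∩ Icc a b) + eVariationOn g (Icc 0 T ∩ Icc b T)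
      = eVariationOn g (Icc 0 T ∩ Icc a T) := eVariationOn.Icc_add_Icc g hab hb.2 hb
  rw [e1, e2, inter_self] at h1
  rw [e3, e4, e2] at h2
  have z1 : eVariationOn g (Icc 0 a) = 0 := by
    rw [eVariationOn.eq_zero_iff]
    intro u hu v hv
    have : ∀ w, w ∈ Icc (0:ℝ) a → g w = 0 := by
      intro w hw
      simp only [g, min_eq_left hw.2, min_eq_left (hw.2.trans hab), sub_self]
    rw [this u hu, this v hv, edist_self]
  have z2 : eVariationOn g (Icc b T) = 0 := by
    rw [eVariationOn.eq_zero_iff]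
    intro u hu v hv
    have : ∀ w, w ∈ Icc b T → g w = x a - x b := by
      intro w hw
      simp only [g, min_eq_right (hab.trans hw.1), min_eq_right hw.1]
    rw [this u hu, this v hv, edist_self]
  have z3 : eVariationOn g (Icc a b) = eVariationOn x (Icc a b) := by
    have : EqOn g (fun r => x a - x r) (Icc a b) := by
      intro w hw
      simp only [g, min_eq_right hw.1, min_eq_left hw.2]
    rw [eVariationOn.eq_of_eqOn this, my_evar_const_sub]
  rw [z3, z2, add_zero] at h2
  rw [← h1, z1, zero_add, ← h2]


lemma my_right_small {a b : ℝ} (x : ℝ → E) (hab : a < b)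
    (hcont : ContinuousWithinAt x (Icc a b) a)
    (hbv : eVariationOn x (Icc a b) ≠ ⊤) {ε : ℝ≥0∞} (hε : 0 < ε) :
    ∃ c ∈ Ioc a b, eVariationOn x (Icc a c) ≤ 2 * ε := by
  set V := eVariationOn x (Icc a b) with hV
  by_cases hV0 : V = 0
  · refine ⟨b, ⟨hab, le_rfl⟩, ?_⟩
    calc eVariationOn x (Icc a b) = 0 := hV0
      _ ≤ 2 * ε := zero_le'
  -- extract a near-optimal partition
  have hlt : V - ε < V := ENNReal.sub_lt_self hbv hV0 hε.ne'
  have hlt' : V - ε < ⨆ p : ℕ × { u : ℕ → ℝ // Monotone u ∧ ∀ i, u i ∈ Icc a b },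
      ∑ i ∈ Finset.range p.1, edist (x (p.2.1 (i + 1))) (x (p.2.1 i)) := hlt
  obtain ⟨⟨n, u, hu, us⟩, hp⟩ := lt_iSup_iff.mp hlt'
  simp only at hp
  have hVS : V ≤ (∑ i ∈ Finset.range n, edist (x (u (i + 1))) (x (u i))) + ε :=
    tsub_le_iff_right.mp hp.le
  -- continuity: get δ
  have hball : x ⁻¹' (EMetric.ball (x a) ε) ∈ nhdsWithin a (Icc a b) :=
    hcont (EMetric.ball_mem_nhds _ hε)
  rw [Metric.mem_nhdsWithin_iff] at hball
  obtain ⟨δ, hδ, hsub⟩ := hball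
  have hedist : ∀ s ∈ Icc a b, dist s a < δ → edist (x s) (x a) < ε := by
    intro s hs hd
    have := hsub ⟨Metric.mem_ball.2 hd, hs⟩
    exact this
  -- choose the cut point c
  set c0 : ℝ := min (a + δ / 2) b with hc0
  have hac0 : a < c0 := lt_min (by linarith) hab
  have hc0b : c0 ≤ b := min_le_right _ _
  set F := (Finset.range (n + 1)).filter (fun i => a < u i) with hF
  set G := insert c0 (F.image u) with hG
  have hGne : G.Nonempty := ⟨c0, Finset.mem_insert_self _ _⟩
  set c := G.min' hGne with hc
  have hcc0 : c ≤ c0 := Finset.min'_le _ _ (Finset.mem_insert_self _ _)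
  have hac : a < c := by
    rw [hc, Finset.lt_min'_iff]
    intro y hy
    rcases Finset.mem_insert.mp hy with rfl | hy
    · exact hac0
    · obtain ⟨i, hi, rfl⟩ := Finset.mem_image.mp hy
      exact (Finset.mem_filter.mp hi).2
  have hcb : c ≤ b := hcc0.trans hc0b
  have hcmem : c ∈ Icc a b := ⟨hac.le, hcb⟩
  have hkey : ∀ i ≤ n, u i ≤ a ∨ c ≤ u i := by
    intro i hi
    rcases le_or_gt (u i) a with h | h
    · exact Or.inl h
    · refine Or.inr (Finset.min'_le _ _ ?_)
      exact Finset.mem_insert_of_mem (Finset.mem_image.mpr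
        ⟨i, Finset.mem_filter.mpr ⟨Finset.mem_range.mpr (Nat.lt_succ_of_le hi), h⟩, rfl⟩)
  have he : edist (x c) (x a) < ε := by
    apply hedist c hcmem
    rw [Real.dist_eq, abs_of_pos (sub_pos.2 hac)]
    have : c ≤ a + δ / 2 := hcc0.trans (min_le_left _ _)
    linarith
  -- clipped partition
  set w : ℕ → ℝ := fun i => max (u i) c with hwdef
  have hw : Monotone w := fun i j hij => max_le_max (hu hij) le_rfl
  have hws : ∀ i, w i ∈ Icc c b := fun i => ⟨le_max_right _ _, max_le (us i).2 hcb⟩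
  set Vc := eVariationOn x (Icc c b) with hVc
  have hSw : (∑ i ∈ Finset.range n, edist (x (w (i + 1))) (x (w i))) ≤ Vc :=
    eVariationOn.sum_le (f := x) (n := n) hw hws
  -- termwise comparison
  have hterm : ∀ i ∈ Finset.range n,
      edist (x (u (i + 1))) (x (u i)) ≤ edist (x (w (i + 1))) (x (w i))
        + (if u i ≤ a ∧ c ≤ u (i + 1) then edist (x c) (x a) else 0) := by
    intro i hi
    rw [Finset.mem_range] at hi
    rcases hkey i hi.le with h1 | h1
    · rcases hkey (i + 1) hi with h2 | h2
      · have e1 : u i = a := le_antisymm h1 (us i).1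
        have e2 : u (i + 1) = a := le_antisymm h2 (us (i + 1)).1
        rw [e1, e2, edist_self]
        exact zero_le'
      · have e1 : u i = a := le_antisymm h1 (us i).1
        rw [if_pos ⟨h1, h2⟩]
        have hw1 : w (i + 1) = u (i + 1) := max_eq_left h2
        have hw0 : w i = c := by rw [hwdef]; simp only [e1]; exact max_eq_right hac.le
        rw [hw1, hw0, e1]
        exact edist_triangle _ _ _
    · have h2 : c ≤ u (i + 1) := h1.trans (hu (Nat.le_succ i))
      have hw1 : w (i + 1) = u (i + 1) := max_eq_left h2
      have hw0 : w i = u i := max_eq_left h1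
      rw [hw1, hw0]
      exact self_le_add_right _ _
  -- sum the correction terms
  set K := (Finset.range n).filter (fun i => u i ≤ a ∧ c ≤ u (i + 1)) with hK
  have hKcard : K.card ≤ 1 := by
    rw [Finset.card_le_one]
    have hmem : ∀ {p q : ℕ}, p ∈ K → q ∈ K → p < q → False := by
      intro p q hpK hqK hpq
      obtain ⟨hpr, hp1, hp2⟩ := Finset.mem_filter.mp hpK
      obtain ⟨hqr, hq1, hq2⟩ := Finset.mem_filter.mp hqK
      have : c ≤ u q := hp2.trans (hu (Nat.succ_le_of_lt hpq))
      exact absurd (this.trans hq1) (not_le.2 hac)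
    intro p hp q hq
    rcases lt_trichotomy p q with h | h | h
    · exact absurd (hmem hp hq h) (fun h => h)
    · exact h
    · exact absurd (hmem hq hp h) (fun h => h)
  have hcorr : (∑ i ∈ Finset.range n,
      (if u i ≤ a ∧ c ≤ u (i + 1) then edist (x c) (x a) else 0)) ≤ edist (x c) (x a) := by
    rw [← Finset.sum_filter, ← hK, Finset.sum_const, nsmul_eq_mul]
    calc (K.card : ℝ≥0∞) * edist (x c) (x a) ≤ 1 * edist (x c) (x a) := by
          apply mul_le_mul_left
          exact_mod_cast hKcard
      _ = edist (x c) (x a) := one_mul _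
  have hS : (∑ i ∈ Finset.range n, edist (x (u (i + 1))) (x (u i)))
      ≤ Vc + edist (x c) (x a) := by
    calc (∑ i ∈ Finset.range n, edist (x (u (i + 1))) (x (u i)))
        ≤ ∑ i ∈ Finset.range n, (edist (x (w (i + 1))) (x (w i))
          + (if u i ≤ a ∧ c ≤ u (i + 1) then edist (x c) (x a) else 0)) :=
          Finset.sum_le_sum hterm
      _ = (∑ i ∈ Finset.range n, edist (x (w (i + 1))) (x (w i)))
          + ∑ i ∈ Finset.range n,
            (if u i ≤ a ∧ c ≤ u (i + 1) then edist (x c) (x a) else 0) :=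
          Finset.sum_add_distrib
      _ ≤ Vc + edist (x c) (x a) := add_le_add hSw hcorr
  -- split the variation at c
  have e1 : Icc a b ∩ Icc a c = Icc a c := inter_eq_right.2 (Icc_subset_Icc le_rfl hcb)
  have e2 : Icc a b ∩ Icc c b = Icc c b := inter_eq_right.2 (Icc_subset_Icc hac.le le_rfl)
  have hsplit : eVariationOn x (Icc a c) + Vc = V := by
    have := eVariationOn.Icc_add_Icc x hac.le hcb hcmem
    rwa [e1, e2, inter_self] at this
  have hVcne : Vc ≠ ⊤ := by
    refine ne_top_of_le_ne_top hbv ?_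
    exact eVariationOn.mono x (Icc_subset_Icc hac.le le_rfl)
  have hfinal : eVariationOn x (Icc a c) + Vc ≤ 2 * ε + Vc := by
    rw [hsplit]
    calc V ≤ (∑ i ∈ Finset.range n, edist (x (u (i + 1))) (x (u i))) + ε := hVS
      _ ≤ (Vc + edist (x c) (x a)) + ε := add_le_add_left hS _
      _ ≤ (Vc + ε) + ε := add_le_add_left (add_le_add_right he.le _) _
      _ = 2 * ε + Vc := by ring
  exact ⟨c, ⟨hac, hcb⟩, (ENNReal.add_le_add_iff_right hVcne).mp hfinal⟩

lemma my_left_small {a b : ℝ} (x : ℝ → E) (hab : a < b)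
    (hcont : ContinuousWithinAt x (Icc a b) b)
    (hbv : eVariationOn x (Icc a b) ≠ ⊤) {ε : ℝ≥0∞} (hε : 0 < ε) :
    ∃ c ∈ Ico a b, eVariationOn x (Icc c b) ≤ 2 * ε := by
  set φ : ℝ → ℝ := fun s => a + b - s with hφ
  have hφc : Continuous φ := by continuity
  have hφanti : ∀ s : Set ℝ, AntitoneOn φ s := fun s p _ q _ hpq => by
    simp only [hφ]; linarith
  have hφim : ∀ p q : ℝ, φ '' Icc p q = Icc (a + b - q) (a + b - p) := fun p q => by
    exact Set.image_const_sub_Icc (a + b) p q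
  have hmaps : MapsTo φ (Icc a b) (Icc a b) := by
    intro s hs
    rw [mem_Icc] at hs
    have hφs : φ s = a + b - s := rfl
    rw [mem_Icc, hφs]
    constructor <;> linarith [hs.1, hs.2]
  have hφa : φ a = b := by simp [hφ]
  have hcont' : ContinuousWithinAt (x ∘ φ) (Icc a b) a := by
    apply ContinuousWithinAt.comp (by rwa [hφa]) (hφc.continuousWithinAt) hmaps
  have hvar' : eVariationOn (x ∘ φ) (Icc a b) = eVariationOn x (Icc a b) := by
    rw [eVariationOn.comp_eq_of_antitoneOn x φ (hφanti _), hφim]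
    congr 1 <;> ring_nf
  obtain ⟨c, hcIoc, hcvar⟩ := my_right_small (x ∘ φ) hab hcont' (hvar' ▸ hbv) hε
  refine ⟨a + b - c, ⟨by linarith [hcIoc.2], by linarith [hcIoc.1]⟩, ?_⟩
  have : eVariationOn (x ∘ φ) (Icc a c) = eVariationOn x (Icc (a + b - c) b) := by
    rw [eVariationOn.comp_eq_of_antitoneOn x φ (hφanti _), hφim]
    congr 1
    ring_nf
  rwa [this] at hcvar

lemma my_shrink {T t : ℝ} (x : ℝ → E) (ht : t ∈ Icc 0 T)
    (hx : ContinuousOn x (Icc 0 T)) (hxv : BoundedVariationOn x (Icc 0 T))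
    {ε : ℝ≥0∞} (hε : 0 < ε) :
    ∃ δ > 0, ∀ s ∈ Icc (0:ℝ) T, |s - t| < δ →
      eVariationOn x (Icc (min s t) (max s t)) ≤ ε := by
  have hε2 : (0 : ℝ≥0∞) < ε / 2 := ENNReal.div_pos hε.ne' (by norm_num)
  have h2 : 2 * (ε / 2) ≤ ε := ENNReal.mul_div_le
  have hright : ∃ δ₁ > (0:ℝ), ∀ s ∈ Icc (0:ℝ) T, t ≤ s → s - t < δ₁ →
      eVariationOn x (Icc t s) ≤ ε := by
    rcases eq_or_lt_of_le ht.2 with hTt | htT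
    · refine ⟨1, one_pos, fun s hs hts _ => ?_⟩
      have hst : s = t := le_antisymm (hs.2.trans_eq hTt.symm) hts
      rw [hst]
      calc eVariationOn x (Icc t t) = 0 := by
            apply eVariationOn.subsingleton
            rw [Icc_self]; exact subsingleton_singleton
        _ ≤ ε := zero_le'
    · have hc : ContinuousWithinAt x (Icc t T) t :=
        (hx t ht).mono (Icc_subset_Icc ht.1 le_rfl)
      have hb : eVariationOn x (Icc t T) ≠ ⊤ :=
        ne_top_of_le_ne_top hxv (eVariationOn.mono x (Icc_subset_Icc ht.1 le_rfl))
      obtain ⟨c, hcIoc, hcvar⟩ := my_right_small x htT hc hb hε2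
      refine ⟨c - t, sub_pos.2 hcIoc.1, fun s hs hts hlt => ?_⟩
      have hsub : Icc t s ⊆ Icc t c := Icc_subset_Icc le_rfl (by linarith)
      exact (eVariationOn.mono x hsub).trans (hcvar.trans h2)
  have hleft : ∃ δ₂ > (0:ℝ), ∀ s ∈ Icc (0:ℝ) T, s ≤ t → t - s < δ₂ →
      eVariationOn x (Icc s t) ≤ ε := by
    rcases eq_or_lt_of_le ht.1 with h0t | h0t
    · refine ⟨1, one_pos, fun s hs hst _ => ?_⟩
      have hst' : s = t := le_antisymm hst (h0t ▸ hs.1)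
      rw [hst']
      calc eVariationOn x (Icc t t) = 0 := by
            apply eVariationOn.subsingleton
            rw [Icc_self]; exact subsingleton_singleton
        _ ≤ ε := zero_le'
    · have hc : ContinuousWithinAt x (Icc 0 t) t :=
        (hx t ht).mono (Icc_subset_Icc le_rfl ht.2)
      have hb : eVariationOn x (Icc 0 t) ≠ ⊤ :=
        ne_top_of_le_ne_top hxv (eVariationOn.mono x (Icc_subset_Icc le_rfl ht.2))
      obtain ⟨c, hcIco, hcvar⟩ := my_left_small x h0t hc hb hε2
      refine ⟨t - c, sub_pos.2 hcIco.2, fun s hs hst hlt => ?_⟩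
      have hsub : Icc s t ⊆ Icc c t := Icc_subset_Icc (by linarith) le_rfl
      exact (eVariationOn.mono x hsub).trans (hcvar.trans h2)
  obtain ⟨δ₁, hδ₁, h₁⟩ := hright
  obtain ⟨δ₂, hδ₂, h₂⟩ := hleft
  refine ⟨min δ₁ δ₂, lt_min hδ₁ hδ₂, fun s hs habs => ?_⟩
  rcases le_total s t with hst | hts
  · rw [min_eq_left hst, max_eq_right hst]
    apply h₂ s hs hst
    have : |s - t| = t - s := by rw [abs_sub_comm, abs_of_nonneg (by linarith)]
    calc t - s = |s - t| := this.symm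
      _ < min δ₁ δ₂ := habs
      _ ≤ δ₂ := min_le_right _ _
  · rw [min_eq_right hts, max_eq_left hts]
    apply h₁ s hs hts
    have : |s - t| = s - t := abs_of_nonneg (by linarith)
    calc s - t = |s - t| := this.symm
      _ < min δ₁ δ₂ := habs
      _ ≤ δ₁ := min_le_left _ _

/-- convergence in the product topology of
`[0,T] × C^{1-var}([0,T],ℝ^d)` implies convergence in the metric `ρ_{1-var}`. -/
theorem stmt_7 (T : ℝ) (hT : 0 < T) (d : ℕ) (hd : 1 ≤ d)
    (tn : ℕ → ℝ) (t : ℝ) (htn : ∀ n, tn n ∈ Set.Icc 0 T) (ht : t ∈ Set.Icc 0 T)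
    (htt : Tendsto tn atTop (nhds t))
    (x : ℝ → EuclideanSpace ℝ (Fin d))
    (hx : ContinuousOn x (Set.Icc 0 T)) (hxv : BoundedVariationOn x (Set.Icc 0 T))
    (xn : ℕ → ℝ → EuclideanSpace ℝ (Fin d))
    (hxnv : ∀ n, BoundedVariationOn (xn n) (Set.Icc 0 T))
    (hvar : Tendsto
      (fun n => (eVariationOn (fun r => xn n r - x r) (Set.Icc 0 T)).toReal)
      atTop (nhds 0))
    (h0 : Tendsto (fun n => xn n 0) atTop (nhds (x 0))) :
    Tendsto (fun n => rho1var T (tn n) (xn n) t x) atTop (nhds 0) := by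
  set A : ℕ → ℝ≥0∞ := fun n => eVariationOn (fun r => xn n r - x r) (Set.Icc 0 T) with hA
  set B : ℕ → ℝ≥0∞ := fun n =>
    eVariationOn x (Set.Icc (min (tn n) t) (max (tn n) t)) with hB
  -- finiteness of A
  have hAfin : ∀ n, A n ≠ ⊤ := by
    intro n
    have h1 : (fun r => xn n r - x r) = fun r => xn n r + -(x r) := by
      funext r; rw [sub_eq_add_neg]
    have h2 : A n ≤ eVariationOn (xn n) (Set.Icc 0 T)
        + eVariationOn (fun r => -(x r)) (Set.Icc 0 T) := by
      rw [hA]; simp only; rw [h1]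
      exact my_evar_add_le _ _ _
    rw [my_evar_neg] at h2
    exact ne_top_of_le_ne_top (ENNReal.add_ne_top.2 ⟨hxnv n, hxv⟩) h2
  -- finiteness of B
  have hBfin : ∀ n, B n ≠ ⊤ := by
    intro n
    apply ne_top_of_le_ne_top hxv
    apply eVariationOn.mono
    apply Set.Icc_subset_Icc (le_min (htn n).1 ht.1)
    exact max_le (htn n).2 ht.2
  -- pointwise bound on rho
  have hbound : ∀ n, rho1var T (tn n) (xn n) t x
      ≤ |tn n - t| + ((A n).toReal + (B n).toReal) := by
    intro n
    rw [rho1var]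
    apply add_le_add_right
    have hdecomp : (fun r => xn n (min r (tn n)) - x (min r t))
        = fun r => (xn n (min r (tn n)) - x (min r (tn n)))
          + (x (min r (tn n)) - x (min r t)) := by
      funext r; abel
    have hg1 : eVariationOn (fun r => xn n (min r (tn n)) - x (min r (tn n)))
        (Set.Icc 0 T) ≤ A n := by
      have hmin : Monotone (fun r : ℝ => min r (tn n)) := fun _ _ h => min_le_min h le_rfl
      have hmono : MonotoneOn (fun r : ℝ => min r (tn n)) (Set.Icc 0 T) := hmin.monotoneOn _
      have hmaps : Set.MapsTo (fun r : ℝ => min r (tn n)) (Set.Icc 0 T) (Set.Icc 0 T) :=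
        fun r hr => ⟨le_min hr.1 (htn n).1, (min_le_left _ _).trans hr.2⟩
      exact eVariationOn.comp_le_of_monotoneOn (fun r => xn n r - x r)
        (fun r : ℝ => min r (tn n)) hmono hmaps
    have hg2 : eVariationOn (fun r => x (min r (tn n)) - x (min r t))
        (Set.Icc 0 T) = B n := by
      rcases le_total (tn n) t with h | h
      · rw [my_stop_diff_eq x (htn n) ht h, hB]
        simp only
        rw [min_eq_left h, max_eq_right h]
      · have hneg : (fun r => x (min r (tn n)) - x (min r t))
            = fun r => -(x (min r t) - x (min r (tn n))) := by
          funext r; rw [neg_sub]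
        rw [hneg, my_evar_neg, my_stop_diff_eq x ht (htn n) h, hB]
        simp only
        rw [min_eq_right h, max_eq_left h]
    have hle : eVariationOn (fun r => xn n (min r (tn n)) - x (min r t)) (Set.Icc 0 T)
        ≤ A n + B n := by
      rw [hdecomp]
      exact (my_evar_add_le _ _ _).trans (add_le_add hg1 hg2.le)
    calc (eVariationOn (fun r => xn n (min r (tn n)) - x (min r t)) (Set.Icc 0 T)).toReal
        ≤ (A n + B n).toReal :=
          ENNReal.toReal_mono (ENNReal.add_ne_top.2 ⟨hAfin n, hBfin n⟩) hle
      _ ≤ (A n).toReal + (B n).toReal := ENNReal.toReal_add_le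
  -- (B n).toReal → 0
  have hBtend : Tendsto (fun n => (B n).toReal) atTop (nhds 0) := by
    have h1 : Tendsto B atTop (nhds 0) := by
      rw [ENNReal.tendsto_nhds_zero]
      intro ε hε
      obtain ⟨δ, hδ, hsmall⟩ := my_shrink x ht hx hxv hε
      have hev : ∀ᶠ n in atTop, |tn n - t| < δ := by
        have := htt.eventually (Metric.ball_mem_nhds t hδ)
        filter_upwards [this] with n hn
        rw [Real.dist_eq] at hn
        exact hn
      filter_upwards [hev] with n hn
      exact hsmall (tn n) (htn n) hn
    have := (ENNReal.tendsto_toReal (by norm_num : (0:ℝ≥0∞) ≠ ⊤)).comp h1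
    exact this
  -- |tn n - t| → 0
  have habs : Tendsto (fun n => |tn n - t|) atTop (nhds 0) := by
    have h1 : Tendsto (fun n => tn n - t) atTop (nhds 0) := by
      have := htt.sub (tendsto_const_nhds (x := t))
      simpa using this
    have := h1.abs
    simpa using this
  -- assemble
  have htotal : Tendsto (fun n => |tn n - t| + ((A n).toReal + (B n).toReal))
      atTop (nhds 0) := by
    have := habs.add (hvar.add hBtend)
    simpa using this
  apply squeeze_zero (fun n => ?_) hbound htotal
  rw [rho1var]
  exact add_nonneg (abs_nonneg _) ENNReal.toReal_nonneg
end
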